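/- Let a > 0, e ∈ [0,1), and E₁, E₂ ∈ ℝ. Let P(E) = (a(cos E − e), a√(1−e²) sin E) ∈ ℝ², r₁ = ‖P(E₁)‖, r₂ = ‖P(E₂)‖, d = ‖P(E₂) − P(E₁)‖. Then d ≤ r₁ + r₂ and r₁ + r₂ + d ≤ 4a; equivalently, both (r₁ + r₂ + d)/(4a) and (r₁ + r₂ − d)/(4a) lie in the interval [0, 1]. -/

import Mathlib

open Real

/-- Elliptic position at eccentric anomaly `E`, with the attracting focus at the origin. -/
noncomputable def ellP (a e E : ℝ) : EuclideanSpace ℝ (Fin 2) :=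
  (WithLp.equiv 2 (Fin 2 → ℝ)).symm
    ![a * (Real.cos E - e), a * Real.sqrt (1 - e ^ 2) * Real.sin E]

private theorem ell_key (e c1 s1 c2 s2 : ℝ) (h1 : c1^2+s1^2=1) (h2 : c2^2+s2^2=1)
    (he0 : 0 ≤ e) (he1 : e ≤ 1) :
    (c2-c1)^2 + (1-e^2)*(s2-s1)^2 ≤ (2+e*(c1+c2))^2 := by
  have hid : (4+4*c1*c2) * ((2+e*(c1+c2))^2 - ((c2-c1)^2 + (1-e^2)*(s2-s1)^2))
      = (2+2*c1*c2+2*s1*s2+2*e*(c1+c2))^2 + (2*(c1+c2)+2*e*(1+c1*c2-s1*s2))^2 := by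
    linear_combination (-4*(1+c1*c2)*(1-e^2) - 4*(1+e^2)*s2^2) * h1 +
      (-4*(1+c1*c2)*(1-e^2) - 4*(1+e^2)*(1-c1^2)) * h2
  rcases lt_or_eq_of_le (by nlinarith [sq_nonneg (c1+c2), sq_nonneg (s1+s2)] : (0:ℝ) ≤ 1 + c1*c2) with h | h
  · nlinarith [sq_nonneg (2+2*c1*c2+2*s1*s2+2*e*(c1+c2)),
      sq_nonneg (2*(c1+c2)+2*e*(1+c1*c2-s1*s2))]
  · clear hid
    have hB : c1^2 + c2^2 = 2 := by
      nlinarith [sq_nonneg (c1+c2), sq_nonneg s1, sq_nonneg s2]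
    have hs1 : s1 = 0 := by
      have h0 : s1^2 = 0 := by linarith [sq_nonneg s1, sq_nonneg s2]
      exact pow_eq_zero_iff (by norm_num) |>.mp h0
    have hs2 : s2 = 0 := by
      have h0 : s2^2 = 0 := by linarith [sq_nonneg s1, sq_nonneg s2]
      exact pow_eq_zero_iff (by norm_num) |>.mp h0
    have hA : c1 + c2 = 0 := by
      have h0 : (c1+c2)^2 = 0 := by linear_combination hB - 2*h
      exact pow_eq_zero_iff (by norm_num) |>.mp h0
    rw [hs1, hs2, hA]
    nlinarith

private theorem norm_ellP (a e E : ℝ) (ha : 0 < a) (he0 : 0 ≤ e) (he1 : e < 1) :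
    ‖ellP a e E‖ = a * (1 - e * Real.cos E) := by
  have hq : Real.sqrt (1 - e ^ 2) ^ 2 = 1 - e ^ 2 :=
    Real.sq_sqrt (by nlinarith)
  simp only [ellP, EuclideanSpace.norm_eq, Fin.sum_univ_two, WithLp.equiv_symm_apply, WithLp.ofLp_toLp, PiLp.toLp_apply,
    Matrix.cons_val_zero, Matrix.cons_val_one, Matrix.head_cons, Real.norm_eq_abs, sq_abs]
  have hr : (a * (Real.cos E - e)) ^ 2 + (a * Real.sqrt (1 - e ^ 2) * Real.sin E) ^ 2
      = (a * (1 - e * Real.cos E)) ^ 2 := by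
    linear_combination (a^2*(1-e^2)) * (Real.sin_sq_add_cos_sq E) + (a^2 * Real.sin E ^ 2) * hq
  rw [hr, Real.sqrt_sq]
  nlinarith [mul_le_mul_of_nonneg_left (Real.cos_le_one E) he0]

private theorem chord_le (a e E₁ E₂ : ℝ) (ha : 0 < a) (he0 : 0 ≤ e) (he1 : e < 1) :
    ‖ellP a e E₂ - ellP a e E₁‖ ≤ 2*a + a*e*(Real.cos E₁ + Real.cos E₂) := by
  have hq : Real.sqrt (1 - e ^ 2) ^ 2 = 1 - e ^ 2 :=
    Real.sq_sqrt (by nlinarith)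
  have hkey := ell_key e (Real.cos E₁) (Real.sin E₁) (Real.cos E₂) (Real.sin E₂)
    (Real.cos_sq_add_sin_sq E₁) (Real.cos_sq_add_sin_sq E₂) he0 he1.le
  have hR : 0 ≤ 2*a + a*e*(Real.cos E₁ + Real.cos E₂) := by
    have h2c : (0:ℝ) ≤ 2 + (Real.cos E₁ + Real.cos E₂) := by
      have := Real.neg_one_le_cos E₁
      have := Real.neg_one_le_cos E₂
      linarith
    nlinarith [mul_nonneg (mul_nonneg ha.le he0) h2c,
      mul_nonneg ha.le (by linarith : (0:ℝ) ≤ 1 - e)]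
  simp [ellP, EuclideanSpace.norm_eq, Fin.sum_univ_two, Real.norm_eq_abs, sq_abs]
  have hX : (a * (Real.cos E₂ - e) - a * (Real.cos E₁ - e)) ^ 2 +
      (a * Real.sqrt (1 - e ^ 2) * Real.sin E₂ - a * Real.sqrt (1 - e ^ 2) * Real.sin E₁) ^ 2
      = a^2 * ((Real.cos E₂ - Real.cos E₁)^2 + (1-e^2)*(Real.sin E₂ - Real.sin E₁)^2) := by
    linear_combination (a^2*(Real.sin E₂ - Real.sin E₁)^2) * hq
  rw [hX]
  have hle : a^2 * ((Real.cos E₂ - Real.cos E₁)^2 + (1-e^2)*(Real.sin E₂ - Real.sin E₁)^2)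
      ≤ a^2 * (2 + e*(Real.cos E₁ + Real.cos E₂))^2 :=
    mul_le_mul_of_nonneg_left hkey (sq_nonneg a)
  calc Real.sqrt (a^2 * ((Real.cos E₂ - Real.cos E₁)^2 + (1-e^2)*(Real.sin E₂ - Real.sin E₁)^2))
      ≤ Real.sqrt (a^2 * (2 + e*(Real.cos E₁ + Real.cos E₂))^2) := Real.sqrt_le_sqrt hle
    _ = Real.sqrt ((2*a + a*e*(Real.cos E₁ + Real.cos E₂))^2) := by ring_nf
    _ = 2*a + a*e*(Real.cos E₁ + Real.cos E₂) := Real.sqrt_sq hR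

/-- Constraints satisfied by the focal distances, the chord and the semimajor axis. -/
theorem ellipse_constraints (a e E₁ E₂ : ℝ) (ha : 0 < a) (he0 : 0 ≤ e) (he1 : e < 1) :
    ‖ellP a e E₂ - ellP a e E₁‖ ≤ ‖ellP a e E₁‖ + ‖ellP a e E₂‖ ∧
    ‖ellP a e E₁‖ + ‖ellP a e E₂‖ + ‖ellP a e E₂ - ellP a e E₁‖ ≤ 4 * a := by
  constructor
  · exact (norm_sub_le _ _).trans (le_of_eq (add_comm _ _))
  · have hc := chord_le a e E₁ E₂ ha he0 he1
    rw [norm_ellP a e E₁ ha he0 he1, norm_ellP a e E₂ ha he0 he1]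
    nlinarith [hc]
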